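/- Let f(x) = (x + α)/(αx + 1) with α > 1. Define φ(x) = (f(f(x)^{k-1} · f(f(x)^k)))^{k-1} · f((f(f(x)^{k-1} · f(f(x)^k)))^k). Then φ(1) = 1 and φ'(1) = (α-1)^2 (α + 1 - 2k)^2 / (α+1)^4. -/

import Mathlib

theorem stmt_12 (α : ℝ) (hα : α > 1) (k : ℕ) (hk : 1 ≤ k) :
    let f : ℝ → ℝ := fun x => (x + α)/(α*x + 1)
    let φ : ℝ → ℝ := fun x =>
      (f ((f x)^(k-1) * f ((f x)^k)))^(k-1) * f ((f ((f x)^(k-1) * f ((f x)^k)))^k)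
    φ 1 = 1 ∧ deriv φ 1 = (α-1)^2 * (α + 1 - 2*k)^2 / (α+1)^4 := by
  intro f φ
  have hα1 : α + 1 ≠ 0 := by nlinarith
  have hf1 : f 1 = 1 := by
    simp only [f]
    rw [mul_one, div_eq_one_iff_eq (by nlinarith)]
    ring
  set t : ℝ := (1 - α) / (1 + α) with ht
  -- derivative of f at 1
  have hd : HasDerivAt f t 1 := by
    have h1 : HasDerivAt (fun x : ℝ => x + α) 1 1 := by
      simpa using (hasDerivAt_id (1:ℝ)).add_const α
    have h2 : HasDerivAt (fun x : ℝ => α * x + 1) α 1 := by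
      simpa using ((hasDerivAt_id (1:ℝ)).const_mul α).add_const 1
    have h3 : α * 1 + 1 ≠ 0 := by nlinarith
    have := h1.div h2 h3
    refine this.congr_deriv ?_
    rw [ht, div_eq_div_iff (by nlinarith : (α*1+1)^2 ≠ 0) (by nlinarith)]
    ring
  -- generic step: if F has derivative s at 1 and F 1 = 1, then
  -- G x = (F x)^(k-1) * f ((F x)^k) has derivative ((k-1)+k*t)*s at 1 and G 1 = 1
  have step : ∀ (F : ℝ → ℝ) (s : ℝ), HasDerivAt F s 1 → F 1 = 1 →
      HasDerivAt (fun x => (F x)^(k-1) * f ((F x)^k))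
        ((((k:ℝ)-1) + (k:ℝ)*t) * s) 1 ∧
      ((fun x => (F x)^(k-1) * f ((F x)^k)) 1) = 1 := by
    intro F s hF hF1
    have hpow : HasDerivAt (fun x => (F x)^k) ((k:ℝ)*s) 1 := by
      have := hF.pow k
      exact this.congr_deriv (by simp [hF1])
    have hpow1 : HasDerivAt (fun x => (F x)^(k-1)) (((k:ℝ)-1)*s) 1 := by
      have := hF.pow (k-1)
      have hc : ((k-1 : ℕ) : ℝ) = (k:ℝ) - 1 := by
        push_cast [Nat.cast_sub hk]; ring
      exact this.congr_deriv (by simp [hF1, hc])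
    have hfout : HasDerivAt f t ((fun x => (F x)^k) 1) := by
      simp only [hF1, one_pow]; exact hd
    have hcomp : HasDerivAt (fun x => f ((F x)^k)) (t * ((k:ℝ)*s)) 1 := by
      have := hfout.comp 1 hpow
      exact this
    have hmul := hpow1.mul hcomp
    constructor
    · refine hmul.congr_deriv ?_
      simp [hF1, hf1]
      ring
    · simp [hF1, hf1]
  have hid : HasDerivAt (fun x : ℝ => f x) t 1 := hd
  obtain ⟨hG, hG1⟩ := step f t hd hf1
  -- second level: F2 x = f (G x)
  have hF2 : HasDerivAt (fun x => f ((f x)^(k-1) * f ((f x)^k)))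
      (t * ((((k:ℝ)-1) + (k:ℝ)*t) * t)) 1 := by
    have hfout : HasDerivAt f t ((fun x => (f x)^(k-1) * f ((f x)^k)) 1) := by
      rw [hG1]; exact hd
    have := hfout.comp 1 hG
    exact this
  have hF21 : (fun x => f ((f x)^(k-1) * f ((f x)^k))) 1 = 1 := by
    simp only [hG1]; exact hf1
  obtain ⟨hφ, hφ1⟩ := step _ _ hF2 hF21
  refine ⟨hφ1, ?_⟩
  have hder : deriv φ 1 = ((((k:ℝ)-1) + (k:ℝ)*t) * (t * ((((k:ℝ)-1) + (k:ℝ)*t) * t))) :=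
    hφ.deriv
  rw [hder, ht]
  have h1α : (1:ℝ) + α ≠ 0 := by nlinarith
  field_simp
  ring
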